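/- Let J° = (l, r) with l finite, β : J° → ℝ Borel with β² locally integrable, and s(x) = ∫_c^x exp(∫_c^y β(z) dz) dy. Suppose s(l) > -∞. Then for any ε > 0 with l+ε ∈ J°, the condition ∫_l^{l+ε} (s(x) - s(l))·β(x)²/s'(x) dx < ∞ holds if and only if ∫_l^{l+ε} (x - l)·β(x)² dx < ∞. -/

import Mathlib

open MeasureTheory Set Filter

lemma seq_lt {l x : ℝ} (hlx : l < x) (n : ℕ) :
    l < l + (x - l)/(n+2) ∧ l + (x - l)/(n+2) < x := by
  constructor
  · have : (0:ℝ) < (x - l)/(n+2) := div_pos (by linarith) (by positivity)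
    linarith
  · have h2 : (1:ℝ) < (n:ℝ) + 2 := by
      have := Nat.cast_nonneg (α := ℝ) n
      linarith
    have : (x - l)/(n+2) < (x - l) := by
      rw [div_lt_iff₀ (by positivity)]
      nlinarith
    linarith

lemma lint_Ioo {l x : ℝ} (hlx : l < x) (g : ℝ → ENNReal)
    (hg : AEMeasurable g (volume.restrict (Ioc l x))) :
    Tendsto (fun n : ℕ => ∫⁻ z in Ioc (l + (x - l)/(n+2)) x, g z) atTop
      (nhds (∫⁻ z in Ioo l x, g z)) := by
  set y : ℕ → ℝ := fun n => l + (x - l)/(n+2) with hy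
  have hyl : ∀ n, l < y n := fun n => (seq_lt hlx n).1
  have hyx : ∀ n, y n < x := fun n => (seq_lt hlx n).2
  have hyanti : Antitone y := by
    intro m n hmn
    have : (x - l)/(n+2) ≤ (x - l)/(m+2) := by
      apply div_le_div_of_nonneg_left (by linarith) (by positivity)
      have : (m:ℝ) ≤ (n:ℝ) := Nat.cast_le.mpr hmn
      linarith
    simp only [hy]; linarith
  set G : ℝ → ENNReal := (Ioc l x).indicator g with hG
  have hGmeas : AEMeasurable G volume :=
    (aemeasurable_indicator_iff measurableSet_Ioc).mpr hg
  set f : ℕ → ℝ → ENNReal := fun n => (Ioc (y n) x).indicator G with hf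
  have hfmeas : ∀ n, AEMeasurable (f n) volume := fun n =>
    hGmeas.indicator measurableSet_Ioc
  have hmono : ∀ z, Monotone fun n => f n z := by
    intro z m n hmn
    simp only [hf]
    apply Set.indicator_le_indicator_of_subset
    · exact Ioc_subset_Ioc_left (hyanti hmn)
    · intro a; exact zero_le
  have hsup : ∀ z, (⨆ n, f n z) = G z := by
    intro z
    by_cases hz : z ∈ Ioc l x
    · obtain ⟨n, hn⟩ : ∃ n : ℕ, y n < z := by
        obtain ⟨n, hn⟩ := exists_nat_gt ((x - l)/(z - l))
        refine ⟨n, ?_⟩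
        have hzl : 0 < z - l := by linarith [hz.1]
        have : (x - l)/(n+2) < z - l := by
          rw [div_lt_iff₀ (by positivity)]
          have h1 : (x - l)/(z - l) < (n:ℝ) + 2 := by linarith
          calc x - l = ((x-l)/(z-l)) * (z-l) := by field_simp
          _ < ((n:ℝ)+2) * (z-l) := by
              apply mul_lt_mul_of_pos_right h1 hzl
          _ = (z-l) * ((n:ℝ)+2) := by ring
        simp only [hy]; linarith
      apply le_antisymm
      · apply iSup_le; intro m
        by_cases hm : z ∈ Ioc (y m) x
        · simp [hf, hm]
        · simp [hf, hm]
      · refine le_trans ?_ (le_iSup _ n)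
        rw [hf]
        simp only
        rw [Set.indicator_of_mem (Set.mem_Ioc.mpr ⟨hn, hz.2⟩)]
    · have hGz : G z = 0 := Set.indicator_of_notMem hz _
      have : ∀ n, f n z = 0 := by
        intro n
        by_cases hm : z ∈ Ioc (y n) x
        · simp [hf, Set.indicator_of_mem hm, hGz]
        · simp [hf, Set.indicator_of_notMem hm]
      simp [this, hGz]
  have key : (⨆ n, ∫⁻ z, f n z) = ∫⁻ z in Ioo l x, g z := by
    rw [← lintegral_iSup' hfmeas (Filter.Eventually.of_forall hmono)]
    have : ∀ᵐ z ∂(volume : Measure ℝ), (⨆ n, f n z) = G z :=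
      Filter.Eventually.of_forall hsup
    rw [lintegral_congr_ae this, hG, lintegral_indicator measurableSet_Ioc,
      ← Measure.restrict_congr_set Ioo_ae_eq_Ioc]
  have hterm : ∀ n, (∫⁻ z, f n z) = ∫⁻ z in Ioc (y n) x, g z := by
    intro n
    rw [hf]
    simp only
    rw [lintegral_indicator measurableSet_Ioc]
    apply setLIntegral_congr_fun measurableSet_Ioc
    intro z hz
    exact Set.indicator_of_mem (Set.mem_Ioc.mpr ⟨lt_trans (hyl n) hz.1, hz.2⟩) _
  have hmono' : Monotone fun n => ∫⁻ z, f n z := fun m n hmn =>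
    lintegral_mono (fun z => hmono z hmn)
  have := tendsto_atTop_iSup hmono'
  rw [key] at this
  convert this using 2 with n
  exact (hterm n).symm

lemma int_sqrt_bound {l x : ℝ} (hlx : l < x) (Φ φ : ℝ → ℝ)
    (hΦd : ∀ z ∈ Ioc l x, HasDerivAt Φ (φ z) z)
    (hΦpos : ∀ z ∈ Ioc l x, 0 < Φ z)
    (hφcont : ContinuousOn φ (Ioc l x))
    (hφnn : ∀ z ∈ Ioc l x, 0 ≤ φ z) :
    ∫⁻ z in Ioo l x, ENNReal.ofReal (φ z / Real.sqrt (Φ z)) ≤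
      ENNReal.ofReal (2 * Real.sqrt (Φ x)) := by
  have hΦcont : ContinuousOn Φ (Ioc l x) := fun z hz =>
    ((hΦd z hz).continuousAt).continuousWithinAt
  have hhcont : ContinuousOn (fun z => φ z / Real.sqrt (Φ z)) (Ioc l x) := by
    apply hφcont.div ((Real.continuous_sqrt.comp_continuousOn hΦcont))
    intro z hz
    exact ne_of_gt (Real.sqrt_pos.mpr (hΦpos z hz))
  have hmeas : AEMeasurable (fun z => ENNReal.ofReal (φ z / Real.sqrt (Φ z)))
      (volume.restrict (Ioc l x)) :=
    (ENNReal.continuous_ofReal.comp_continuousOn hhcont).aemeasurable measurableSet_Ioc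
  have htends := lint_Ioo hlx _ hmeas
  refine le_of_tendsto htends (Filter.Eventually.of_forall ?_)
  intro n
  set y := l + (x - l)/(n+2) with hydef
  obtain ⟨hly, hyx⟩ := seq_lt hlx n
  have hsub : Icc y x ⊆ Ioc l x := fun z hz => ⟨lt_of_lt_of_le hly hz.1, hz.2⟩
  -- FTC on [y, x]
  have hF : ∀ z ∈ uIcc y x, HasDerivAt (fun t => 2 * Real.sqrt (Φ t))
      (φ z / Real.sqrt (Φ z)) z := by
    intro z hz
    rw [uIcc_of_le hyx.le] at hz
    have hz' := hsub hz
    have h1 : HasDerivAt (fun t => Real.sqrt (Φ t)) (φ z / (2 * Real.sqrt (Φ z))) z :=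
      (hΦd z hz').sqrt (ne_of_gt (hΦpos z hz'))
    have h2 := h1.const_mul (2:ℝ)
    convert h2 using 1
    have : Real.sqrt (Φ z) ≠ 0 := ne_of_gt (Real.sqrt_pos.mpr (hΦpos z hz'))
    · rfl
    · rfl
    field_simp
  have hint : IntervalIntegrable (fun z => φ z / Real.sqrt (Φ z)) volume y x := by
    apply ContinuousOn.intervalIntegrable
    rw [uIcc_of_le hyx.le]
    exact hhcont.mono hsub
  have heq : ∫ z in y..x, φ z / Real.sqrt (Φ z) =
      2 * Real.sqrt (Φ x) - 2 * Real.sqrt (Φ y) :=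
    intervalIntegral.integral_eq_sub_of_hasDerivAt hF hint
  have hIoc : ∫⁻ z in Ioc y x, ENNReal.ofReal (φ z / Real.sqrt (Φ z)) =
      ENNReal.ofReal (∫ z in Ioc y x, φ z / Real.sqrt (Φ z)) := by
    rw [ofReal_integral_eq_lintegral_ofReal]
    · exact (hhcont.mono hsub).integrableOn_Icc.mono_set Ioc_subset_Icc_self
    · refine (ae_restrict_iff' measurableSet_Ioc).mpr (Filter.Eventually.of_forall ?_)
      intro z hz
      have hz' : z ∈ Ioc l x := ⟨lt_trans hly hz.1, hz.2⟩
      exact div_nonneg (hφnn z hz') (Real.sqrt_nonneg _)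
  rw [hIoc, ← intervalIntegral.integral_of_le hyx.le, heq]
  apply ENNReal.ofReal_le_ofReal
  have : 0 ≤ Real.sqrt (Φ y) := Real.sqrt_nonneg _
  linarith

lemma cs_bound (β φ Φ : ℝ → ℝ) {y x : ℝ} (K : ℝ) (hyx : y < x) (hK : 0 ≤ K)
    (hβm : Measurable β)
    (hβint : IntegrableOn β (Icc y x) volume)
    (hφcont : ContinuousOn φ (Icc y x)) (hΦcont : ContinuousOn Φ (Icc y x))
    (hφpos : ∀ z ∈ Icc y x, 0 < φ z) (hΦpos : ∀ z ∈ Icc y x, 0 < Φ z)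
    (hΦd : ∀ z ∈ Icc y x, HasDerivAt Φ (φ z) z)
    (hbound : ∫⁻ z in Ioc y x, ENNReal.ofReal (Φ z / φ z * (β z)^2) ≤ ENNReal.ofReal K) :
    Real.exp |∫ z in y..x, β z| ≤ Real.exp (K/2) * (Real.sqrt (Φ x) / Real.sqrt (Φ y)) := by
  have hxmem : x ∈ Icc y x := ⟨hyx.le, le_refl x⟩
  have hymem : y ∈ Icc y x := ⟨le_refl y, hyx.le⟩
  set L := Real.log (Φ x) - Real.log (Φ y) with hLdef
  -- Step 1: FTC for log ∘ Φ
  have hlogd : ∀ z ∈ uIcc y x, HasDerivAt (fun t => Real.log (Φ t)) (φ z / Φ z) z := by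
    intro z hz
    rw [uIcc_of_le hyx.le] at hz
    exact (hΦd z hz).log (ne_of_gt (hΦpos z hz))
  have hquotcont : ContinuousOn (fun z => φ z / Φ z) (Icc y x) :=
    hφcont.div hΦcont (fun z hz => ne_of_gt (hΦpos z hz))
  have hquotint : IntervalIntegrable (fun z => φ z / Φ z) volume y x := by
    apply ContinuousOn.intervalIntegrable
    rwa [uIcc_of_le hyx.le]
  have hL : ∫ z in y..x, φ z / Φ z = L :=
    intervalIntegral.integral_eq_sub_of_hasDerivAt hlogd hquotint
  have hL0 : 0 ≤ L := by
    rw [← hL]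
    apply intervalIntegral.integral_nonneg hyx.le
    intro z hz
    exact div_nonneg (hφpos z hz).le (hΦpos z hz).le
  have hLlint : ∫⁻ z in Ioc y x, ENNReal.ofReal (φ z / Φ z) = ENNReal.ofReal L := by
    rw [← ofReal_integral_eq_lintegral_ofReal]
    · rw [← intervalIntegral.integral_of_le hyx.le, hL]
    · exact hquotcont.integrableOn_Icc.mono_set Ioc_subset_Icc_self
    · refine (ae_restrict_iff' measurableSet_Ioc).mpr (Filter.Eventually.of_forall ?_)
      intro z hz
      have hz' : z ∈ Icc y x := Ioc_subset_Icc_self hz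
      exact div_nonneg (hφpos z hz').le (hΦpos z hz').le
  -- Step 2: Cauchy-Schwarz
  set u : ℝ → ENNReal := fun z => ENNReal.ofReal (Real.sqrt (Φ z / φ z) * |β z|) with hu
  set v : ℝ → ENNReal := fun z => ENNReal.ofReal (Real.sqrt (φ z / Φ z)) with hv
  have hucont : ContinuousOn (fun z => Real.sqrt (Φ z / φ z)) (Icc y x) :=
    Real.continuous_sqrt.comp_continuousOn
      (hΦcont.div hφcont (fun z hz => ne_of_gt (hφpos z hz)))
  have humeas : AEMeasurable u (volume.restrict (Ioc y x)) := by
    apply ENNReal.measurable_ofReal.comp_aemeasurable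
    apply AEMeasurable.mul
    · exact ((hucont.mono Ioc_subset_Icc_self).aemeasurable measurableSet_Ioc)
    · exact (hβm.abs).aemeasurable
  have hvmeas : AEMeasurable v (volume.restrict (Ioc y x)) := by
    apply ENNReal.measurable_ofReal.comp_aemeasurable
    apply ContinuousOn.aemeasurable _ measurableSet_Ioc
    exact (Real.continuous_sqrt.comp_continuousOn
      (hφcont.div hΦcont (fun z hz => ne_of_gt (hΦpos z hz)))).mono Ioc_subset_Icc_self
  have hconj : Real.HolderConjugate 2 2 := Real.HolderConjugate.two_two
  have hHolder := ENNReal.lintegral_mul_le_Lp_mul_Lq (volume.restrict (Ioc y x))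
    hconj humeas hvmeas
  -- identify u*v with ofReal |β|
  have huv : ∀ z ∈ Ioc y x, (u * v) z = ENNReal.ofReal |β z| := by
    intro z hz
    have hz' : z ∈ Icc y x := Ioc_subset_Icc_self hz
    have hφz := hφpos z hz'
    have hΦz := hΦpos z hz'
    simp only [hu, hv, Pi.mul_apply]
    rw [← ENNReal.ofReal_mul (by positivity)]
    congr 1
    have : Real.sqrt (Φ z / φ z) * |β z| * Real.sqrt (φ z / Φ z)
        = Real.sqrt ((Φ z / φ z) * (φ z / Φ z)) * |β z| := by
      rw [Real.sqrt_mul (by positivity)]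
      ring
    rw [this]
    have hone : (Φ z / φ z) * (φ z / Φ z) = 1 := by field_simp
    rw [hone, Real.sqrt_one, one_mul]
  -- identify u^2 and v^2
  have hu2 : ∫⁻ z in Ioc y x, u z ^ (2:ℝ) ≤ ENNReal.ofReal K := by
    refine le_trans (le_of_eq ?_) hbound
    apply setLIntegral_congr_fun measurableSet_Ioc
    intro z hz
    have hz' : z ∈ Icc y x := Ioc_subset_Icc_self hz
    have hφz := hφpos z hz'
    have hΦz := hΦpos z hz'
    simp only [hu]
    rw [show (2:ℝ) = ((2:ℕ):ℝ) by norm_num, ENNReal.rpow_natCast,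
      ← ENNReal.ofReal_pow (by positivity)]
    congr 1
    rw [mul_pow, Real.sq_sqrt (by positivity), sq_abs]
  have hv2 : ∫⁻ z in Ioc y x, v z ^ (2:ℝ) = ENNReal.ofReal L := by
    rw [← hLlint]
    apply setLIntegral_congr_fun measurableSet_Ioc
    intro z hz
    have hz' : z ∈ Icc y x := Ioc_subset_Icc_self hz
    have hφz := hφpos z hz'
    have hΦz := hΦpos z hz'
    simp only [hv]
    rw [show (2:ℝ) = ((2:ℕ):ℝ) by norm_num, ENNReal.rpow_natCast,
      ← ENNReal.ofReal_pow (by positivity)]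
    congr 1
    rw [Real.sq_sqrt (by positivity)]
  have habs_lint : ∫⁻ z in Ioc y x, ENNReal.ofReal |β z| ≤
      ENNReal.ofReal (Real.sqrt K * Real.sqrt L) := by
    have h1 : ∫⁻ z in Ioc y x, ENNReal.ofReal |β z| = ∫⁻ z in Ioc y x, (u * v) z :=
      (setLIntegral_congr_fun measurableSet_Ioc
        (fun z hz => (huv z hz).symm))
    rw [h1]
    refine le_trans hHolder ?_
    calc (∫⁻ z in Ioc y x, u z ^ (2:ℝ)) ^ (1/2:ℝ) * (∫⁻ z in Ioc y x, v z ^ (2:ℝ)) ^ (1/2:ℝ)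
        ≤ (ENNReal.ofReal K) ^ (1/2:ℝ) * (ENNReal.ofReal L) ^ (1/2:ℝ) := by
          apply mul_le_mul'
          · exact ENNReal.rpow_le_rpow hu2 (by norm_num)
          · exact le_of_eq (by rw [hv2])
      _ = ENNReal.ofReal (Real.sqrt K * Real.sqrt L) := by
          rw [ENNReal.ofReal_rpow_of_nonneg hK (by norm_num),
            ENNReal.ofReal_rpow_of_nonneg hL0 (by norm_num),
            ← Real.sqrt_eq_rpow, ← Real.sqrt_eq_rpow,
            ← ENNReal.ofReal_mul (Real.sqrt_nonneg K)]
  -- Step 3: real inequality on ∫ |β|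
  have hβabs_int : IntegrableOn (fun z => |β z|) (Ioc y x) volume :=
    IntegrableOn.mono_set hβint.abs Ioc_subset_Icc_self
  have habs : ∫ z in y..x, |β z| ≤ Real.sqrt K * Real.sqrt L := by
    have hofreal : ENNReal.ofReal (∫ z in Ioc y x, |β z|) =
        ∫⁻ z in Ioc y x, ENNReal.ofReal |β z| := by
      apply ofReal_integral_eq_lintegral_ofReal hβabs_int
      exact Filter.Eventually.of_forall (fun z => abs_nonneg _)
    rw [intervalIntegral.integral_of_le hyx.le]
    rw [← ENNReal.ofReal_le_ofReal_iff (by positivity), hofreal]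
    exact habs_lint
  have hKL : |∫ z in y..x, β z| ≤ K/2 + L/2 := by
    have h1 : |∫ z in y..x, β z| ≤ ∫ z in y..x, |β z| :=
      intervalIntegral.abs_integral_le_integral_abs hyx.le
    have h2 : Real.sqrt K * Real.sqrt L ≤ K/2 + L/2 := by
      nlinarith [sq_nonneg (Real.sqrt K - Real.sqrt L), Real.sq_sqrt hK,
        Real.sq_sqrt hL0, Real.sqrt_nonneg K, Real.sqrt_nonneg L]
    linarith
  -- Step 4: exponentiate
  have hexp : Real.exp |∫ z in y..x, β z| ≤ Real.exp (K/2) * Real.exp (L/2) := by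
    rw [← Real.exp_add]
    exact Real.exp_le_exp.mpr (by linarith)
  refine le_trans hexp ?_
  apply mul_le_mul_of_nonneg_left _ (Real.exp_pos _).le
  have hΦx := hΦpos x hxmem
  have hΦy := hΦpos y hymem
  have : Real.exp (L/2) = Real.sqrt (Φ x) / Real.sqrt (Φ y) := by
    have hx2 : Real.log (Real.sqrt (Φ x)) = Real.log (Φ x) / 2 := Real.log_sqrt hΦx.le
    have hy2 : Real.log (Real.sqrt (Φ y)) = Real.log (Φ y) / 2 := Real.log_sqrt hΦy.le
    rw [hLdef, show (Real.log (Φ x) - Real.log (Φ y))/2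
        = Real.log (Φ x)/2 - Real.log (Φ y)/2 by ring, ← hx2, ← hy2,
      Real.exp_sub, Real.exp_log (Real.sqrt_pos.mpr hΦx),
      Real.exp_log (Real.sqrt_pos.mpr hΦy)]
  exact le_of_eq this

/-- With `s(x) = ∫_c^x exp(∫_c^y β(z) dz) dy` on `(l,r)`, `β²` locally integrable,
and `s(l) > -∞` (i.e. `s` tends to a finite limit `sl` at `l+`), for any `ε > 0` with
`l + ε ∈ (l,r)`:  `∫_l^{l+ε} (s(x) - s(l))·β(x)²/s'(x) dx < ∞  ↔  ∫_l^{l+ε} (x-l)·β(x)² dx < ∞`,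
where `s'(x) = exp(∫_c^x β(z) dz)`. -/

theorem stmt1 (l r c : ℝ) (hlr : l < r) (hc : c ∈ Ioo l r)
    (β : ℝ → ℝ) (hβ : Measurable β)
    (hloc : ∀ a b : ℝ, l < a → a ≤ b → b < r →
      IntegrableOn (fun x => (β x) ^ 2) (Icc a b) volume)
    (s : ℝ → ℝ)
    (hs : ∀ x ∈ Ioo l r, s x = ∫ y in c..x, Real.exp (∫ z in c..y, β z))
    (sl : ℝ) (hsl : Tendsto s (nhdsWithin l (Ioi l)) (nhds sl)) :
    ∀ ε > (0:ℝ), l + ε < r →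
      ((∫⁻ x in Ioo l (l + ε),
          ENNReal.ofReal ((s x - sl) * (β x) ^ 2 / Real.exp (∫ z in c..x, β z)) < ⊤) ↔
        (∫⁻ x in Ioo l (l + ε), ENNReal.ofReal ((x - l) * (β x) ^ 2) < ⊤)) := by
  intro ε hε hbr
  set b := l + ε with hbdef
  have hlb : l < b := by rw [hbdef]; linarith
  have hcl : l < c := hc.1
  have hcr : c < r := hc.2
  set w : ℝ → ℝ := fun t => ∫ z in c..t, β z with hwdef
  set ρ : ℝ → ℝ := fun t => Real.exp (w t) with hρdef
  set Φ : ℝ → ℝ := fun t => s t - sl with hΦdef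
  have hρpos : ∀ t, 0 < ρ t := fun t => Real.exp_pos _
  -- integrability of β on compact subintervals
  have hβI : ∀ y x : ℝ, l < y → x < r → IntegrableOn β (Icc y x) volume := by
    intro y x hy hx
    rcases le_or_gt y x with hyx | hyx
    · have hint2 := hloc y x hy hyx hx
      have hconst : IntegrableOn (fun _ : ℝ => (1:ℝ)) (Icc y x) volume :=
        integrableOn_const measure_Icc_lt_top.ne
      apply Integrable.mono' (hconst.add hint2) hβ.aestronglyMeasurable
      refine Filter.Eventually.of_forall (fun z => ?_)
      simp only [Real.norm_eq_abs, Pi.add_apply]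
      nlinarith [sq_nonneg (|β z| - 1), sq_abs (β z), abs_nonneg (β z)]
    · rw [Icc_eq_empty (not_le.mpr hyx)]
      exact integrableOn_empty
  have hβII : ∀ y x : ℝ, y ∈ Ioo l r → x ∈ Ioo l r → IntervalIntegrable β volume y x := by
    intro y x hy hx
    apply IntegrableOn.intervalIntegrable
    rw [uIcc]
    exact hβI _ _ (lt_inf_iff.mpr ⟨hy.1, hx.1⟩) (sup_lt_iff.mpr ⟨hy.2, hx.2⟩)
  -- interval additivity for w
  have hwadd : ∀ y x : ℝ, y ∈ Ioo l r → x ∈ Ioo l r →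
      w x - w y = ∫ z in y..x, β z := by
    intro y x hy hx
    have := intervalIntegral.integral_add_adjacent_intervals
      (hβII c y hc hy) (hβII y x hy hx)
    simp only [hwdef]
    linarith
  -- continuity of w on Ioo l r
  have hwcontAt : ∀ x ∈ Ioo l r, ContinuousAt w x := by
    intro x hx
    set a := (l + min x c)/2 with hadef
    set d := (max x c + r)/2 with hddef
    have hminl : l < min x c := lt_min hx.1 hcl
    have hmaxr : max x c < r := max_lt hx.2 hcr
    have hla : l < a := by rw [hadef]; linarith
    have ham : a < min x c := by rw [hadef]; linarith
    have hmd : max x c < d := by rw [hddef]; linarith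
    have hdr : d < r := by rw [hddef]; linarith
    have haIr : a ∈ Ioo l r := ⟨hla, by
      calc a < min x c := ham
      _ ≤ x := min_le_left _ _
      _ < r := hx.2⟩
    have had : a ≤ d := by
      calc a ≤ min x c := ham.le
      _ ≤ max x c := (min_le_left _ _).trans (le_max_left _ _)
      _ ≤ d := hmd.le
    have hIccsub : Icc a d ⊆ Ioo l r := fun z hz => ⟨lt_of_lt_of_le hla hz.1,
      lt_of_le_of_lt hz.2 hdr⟩
    have hprimcont : ContinuousOn (fun t => ∫ z in a..t, β z) (uIcc a d) := by
      apply intervalIntegral.continuousOn_primitive_interval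
      rw [uIcc_of_le had]
      exact hβI _ _ hla hdr
    have hxmem : x ∈ Ioo a d := ⟨lt_of_lt_of_le ham (min_le_left _ _),
      lt_of_le_of_lt (le_max_left _ _) hmd⟩
    have hprimat : ContinuousAt (fun t => ∫ z in a..t, β z) x := by
      apply hprimcont.continuousAt
      rw [uIcc_of_le had]
      exact Icc_mem_nhds hxmem.1 hxmem.2
    have hevent : (fun t => w a + ∫ z in a..t, β z) =ᶠ[nhds x] w := by
      apply eventually_of_mem (isOpen_Ioo.mem_nhds (show x ∈ Ioo l r from hx))
      intro t ht
      have := hwadd a t haIr ht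
      show w a + (∫ z in a..t, β z) = w t
      linarith
    exact ContinuousAt.congr (hprimat.const_add (w a)) hevent
  have hρcontAt : ∀ x ∈ Ioo l r, ContinuousAt ρ x := by
    intro x hx
    exact Real.continuous_exp.continuousAt.comp (hwcontAt x hx)
  have hρcontOn : ContinuousOn ρ (Ioo l r) := fun x hx =>
    (hρcontAt x hx).continuousWithinAt
  have hρInt : ∀ y x : ℝ, y ∈ Ioo l r → x ∈ Ioo l r →
      IntervalIntegrable ρ volume y x := by
    intro y x hy hx
    apply ContinuousOn.intervalIntegrable
    apply hρcontOn.mono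
    rw [uIcc]
    intro z hz
    exact ⟨lt_of_lt_of_le (lt_inf_iff.mpr ⟨hy.1, hx.1⟩) hz.1,
      lt_of_le_of_lt hz.2 (sup_lt_iff.mpr ⟨hy.2, hx.2⟩)⟩
  -- derivative of s
  have hsd : ∀ x ∈ Ioo l r, HasDerivAt s (ρ x) x := by
    intro x hx
    have hprim : HasDerivAt (fun u => ∫ t in c..u, ρ t) (ρ x) x := by
      apply intervalIntegral.integral_hasDerivAt_right (hρInt c x hc hx)
      · exact ContinuousOn.stronglyMeasurableAtFilter isOpen_Ioo hρcontOn x hx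
      · exact hρcontAt x hx
    apply hprim.congr_of_eventuallyEq
    apply eventually_of_mem (isOpen_Ioo.mem_nhds hx)
    intro t ht
    exact hs t ht
  have hΦd : ∀ x ∈ Ioo l r, HasDerivAt Φ (ρ x) x := by
    intro x hx
    exact (hsd x hx).sub_const sl
  have hΦcontAt : ∀ x ∈ Ioo l r, ContinuousAt Φ x := fun x hx =>
    ((hsd x hx).continuousAt).sub continuousAt_const
  -- s differences
  have hdiff : ∀ y x : ℝ, y ∈ Ioo l r → x ∈ Ioo l r →
      s x - s y = ∫ t in y..x, ρ t := by
    intro y x hy hx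
    rw [hs x hx, hs y hy]
    exact intervalIntegral.integral_interval_sub_left (hρInt c x hc hx) (hρInt c y hc hy)
  have hsmono : ∀ y x : ℝ, y ∈ Ioo l r → x ∈ Ioo l r → y ≤ x → s y ≤ s x := by
    intro y x hy hx hyx
    have h1 : 0 ≤ ∫ t in y..x, ρ t :=
      intervalIntegral.integral_nonneg hyx (fun t _ => (hρpos t).le)
    have := hdiff y x hy hx
    linarith
  have hsslt : ∀ y x : ℝ, y ∈ Ioo l r → x ∈ Ioo l r → y < x → s y < s x := by
    intro y x hy hx hyx
    have h1 : 0 < ∫ t in y..x, ρ t :=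
      intervalIntegral.intervalIntegral_pos_of_pos_on (hρInt y x hy hx)
        (fun t _ => hρpos t) hyx
    have := hdiff y x hy hx
    linarith
  have hΦpos : ∀ x ∈ Ioo l r, 0 < Φ x := by
    intro x hx
    set m := (l + x)/2 with hmdef
    have hml : l < m := by rw [hmdef]; linarith [hx.1]
    have hmx : m < x := by rw [hmdef]; linarith [hx.1]
    have hmIr : m ∈ Ioo l r := ⟨hml, lt_trans hmx hx.2⟩
    have h1 : s m < s x := hsslt m x hmIr hx hmx
    have h2 : sl ≤ s m := by
      apply le_of_tendsto hsl
      apply eventually_of_mem (Ioc_mem_nhdsGT_of_mem (⟨le_refl l, hml⟩ : l ∈ Ico l m))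
      intro t ht
      exact hsmono t m ⟨ht.1, lt_of_le_of_lt ht.2 hmIr.2⟩ hmIr ht.2
    simp only [hΦdef]
    linarith
  -- representation of Φ as a lower integral
  have hΦrep : ∀ x ∈ Ioo l r, ENNReal.ofReal (Φ x) =
      ∫⁻ t in Ioo l x, ENNReal.ofReal (ρ t) := by
    intro x hx
    have hlx : l < x := hx.1
    have hIocsub : Ioc l x ⊆ Ioo l r := fun z hz => ⟨hz.1, lt_of_le_of_lt hz.2 hx.2⟩
    have hmeas : AEMeasurable (fun t => ENNReal.ofReal (ρ t))
        (volume.restrict (Ioc l x)) :=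
      (ENNReal.continuous_ofReal.comp_continuousOn (hρcontOn.mono hIocsub)).aemeasurable
        measurableSet_Ioc
    have htends := lint_Ioo hlx _ hmeas
    have hterm : ∀ n : ℕ, (∫⁻ t in Ioc (l + (x - l)/(n+2)) x, ENNReal.ofReal (ρ t)) =
        ENNReal.ofReal (s x - s (l + (x - l)/(n+2))) := by
      intro n
      obtain ⟨h1, h2⟩ := seq_lt hlx n
      set yn := l + (x - l)/(n+2) with hyndef
      have hynIr : yn ∈ Ioo l r := ⟨h1, lt_trans h2 hx.2⟩
      rw [← ofReal_integral_eq_lintegral_ofReal]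
      · congr 1
        rw [← intervalIntegral.integral_of_le h2.le]
        exact (hdiff yn x hynIr hx).symm
      · have hIccsub : Icc yn x ⊆ Ioo l r := fun z hz =>
          ⟨lt_of_lt_of_le h1 hz.1, lt_of_le_of_lt hz.2 hx.2⟩
        exact IntegrableOn.mono_set ((hρcontOn.mono hIccsub).integrableOn_Icc)
          Ioc_subset_Icc_self
      · exact Filter.Eventually.of_forall (fun t => (hρpos t).le)
    have hyn_tend : Tendsto (fun n : ℕ => l + (x - l)/(n+2)) atTop (nhdsWithin l (Ioi l)) := by
      rw [tendsto_nhdsWithin_iff]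
      constructor
      · have h0 : Tendsto (fun n : ℕ => (x - l)/((n:ℝ)+2)) atTop (nhds 0) := by
          apply Tendsto.div_atTop tendsto_const_nhds
          exact Filter.tendsto_atTop_add_const_right atTop 2 tendsto_natCast_atTop_atTop
        have h1 : Tendsto (fun n : ℕ => l + (x - l)/((n:ℝ)+2)) atTop (nhds (l + 0)) :=
          Tendsto.add tendsto_const_nhds h0
        simpa using h1
      · exact Filter.Eventually.of_forall (fun n => (seq_lt hlx n).1)
    have hcv : Tendsto (fun n : ℕ => ENNReal.ofReal (s x - s (l + (x - l)/(n+2)))) atTop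
        (nhds (ENNReal.ofReal (s x - sl))) := by
      apply ENNReal.tendsto_ofReal
      exact tendsto_const_nhds.sub (hsl.comp hyn_tend)
    have : (fun n : ℕ => ∫⁻ t in Ioc (l + (x - l)/(n+2)) x, ENNReal.ofReal (ρ t)) =
        fun n : ℕ => ENNReal.ofReal (s x - s (l + (x - l)/(n+2))) := funext hterm
    rw [this] at htends
    simp only [hΦdef]
    exact (tendsto_nhds_unique htends hcv).symm
  -- now the two directions
  constructor
  · -- A < ⊤ → B < ⊤
    intro hA
    set K := (∫⁻ x in Ioo l b,
      ENNReal.ofReal ((s x - sl) * β x ^ 2 / Real.exp (∫ z in c..x, β z))).toReal with hKdef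
    have hKofReal : ENNReal.ofReal K = ∫⁻ x in Ioo l b,
        ENNReal.ofReal ((s x - sl) * β x ^ 2 / Real.exp (∫ z in c..x, β z)) :=
      ENNReal.ofReal_toReal hA.ne
    have hK0 : 0 ≤ K := ENNReal.toReal_nonneg
    have hptA : ∀ x ∈ Ioo l b, x - l ≤ 2 * Real.exp (K/2) * Φ x / ρ x := by
      intro x hx
      have hxIr : x ∈ Ioo l r := ⟨hx.1, lt_trans hx.2 hbr⟩
      have hlx : l < x := hx.1
      have hΦx := hΦpos x hxIr
      set C := Real.exp (K/2) * Real.sqrt (Φ x) / ρ x with hCdef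
      have hC0 : 0 ≤ C := by
        rw [hCdef]
        exact div_nonneg (mul_nonneg (Real.exp_pos _).le (Real.sqrt_nonneg _)) (hρpos x).le
      have hC2 : ∀ y ∈ Ioo l x, 1 ≤ C * (ρ y / Real.sqrt (Φ y)) := by
        intro y hy
        have hyIr : y ∈ Ioo l r := ⟨hy.1, lt_trans hy.2 hxIr.2⟩
        have hΦy := hΦpos y hyIr
        have hIccsub : Icc y x ⊆ Ioo l r := fun z hz =>
          Set.mem_Ioo.mpr ⟨lt_of_lt_of_le hy.1 hz.1, lt_of_le_of_lt hz.2 hxIr.2⟩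
        have hbound : ∫⁻ z in Ioc y x,
            ENNReal.ofReal (Φ z / ρ z * β z ^ 2) ≤ ENNReal.ofReal K := by
          have heq : ∀ z ∈ Ioc y x, ENNReal.ofReal (Φ z / ρ z * β z ^ 2) =
              ENNReal.ofReal ((s z - sl) * β z ^ 2 / Real.exp (∫ t in c..z, β t)) := by
            intro z _
            congr 1
            simp only [hΦdef, hρdef, hwdef]
            ring
          rw [setLIntegral_congr_fun measurableSet_Ioc heq,
            hKofReal]
          have hsub : Ioc y x ⊆ Ioo l b := fun z hz =>
            Set.mem_Ioo.mpr ⟨lt_trans hy.1 hz.1, lt_of_le_of_lt hz.2 hx.2⟩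
          exact lintegral_mono' (Measure.restrict_mono hsub le_rfl) le_rfl
        have hcs : Real.exp |∫ z in y..x, β z| ≤
            Real.exp (K/2) * (Real.sqrt (Φ x) / Real.sqrt (Φ y)) :=
          cs_bound β ρ Φ K hy.2 hK0 hβ (hβI y x hy.1 hxIr.2)
            (hρcontOn.mono hIccsub)
            (fun z hz => (hΦcontAt z (hIccsub hz)).continuousWithinAt)
            (fun z _ => hρpos z) (fun z hz => hΦpos z (hIccsub hz))
            (fun z hz => hΦd z (hIccsub hz)) hbound
        have hwd := hwadd y x hyIr hxIr
        have h2 : w x - w y ≤ |∫ z in y..x, β z| := by rw [← hwd]; exact le_abs_self _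
        have h4 : ρ x / ρ y ≤ Real.exp (K/2) * (Real.sqrt (Φ x) / Real.sqrt (Φ y)) := by
          have h3 : ρ x / ρ y = Real.exp (w x - w y) := by
            simp only [hρdef]; rw [Real.exp_sub]
          rw [h3]
          exact le_trans (Real.exp_le_exp.mpr h2) hcs
        have h4' : ρ x / ρ y ≤ (Real.exp (K/2) * Real.sqrt (Φ x)) / Real.sqrt (Φ y) := by
          rw [mul_div_assoc]; exact h4
        rw [div_le_div_iff₀ (hρpos y) (Real.sqrt_pos.mpr hΦy)] at h4'
        have h6 : 1 ≤ (Real.exp (K/2) * Real.sqrt (Φ x) * ρ y) / (ρ x * Real.sqrt (Φ y)) :=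
          (one_le_div (by
            exact mul_pos (hρpos x) (Real.sqrt_pos.mpr hΦy))).mpr h4'
        calc (1:ℝ) ≤ (Real.exp (K/2) * Real.sqrt (Φ x) * ρ y) / (ρ x * Real.sqrt (Φ y)) := h6
        _ = C * (ρ y / Real.sqrt (Φ y)) := by
            rw [hCdef]
            have h7 : ρ x ≠ 0 := (hρpos x).ne'
            have h8 : Real.sqrt (Φ y) ≠ 0 := (Real.sqrt_pos.mpr hΦy).ne'
            field_simp
      have hsqint : ∫⁻ t in Ioo l x, ENNReal.ofReal (ρ t / Real.sqrt (Φ t)) ≤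
          ENNReal.ofReal (2 * Real.sqrt (Φ x)) := by
        apply int_sqrt_bound hlx Φ ρ
        · intro z hz
          exact hΦd z (Set.mem_Ioo.mpr ⟨hz.1, lt_of_le_of_lt hz.2 hxIr.2⟩)
        · intro z hz
          exact hΦpos z (Set.mem_Ioo.mpr ⟨hz.1, lt_of_le_of_lt hz.2 hxIr.2⟩)
        · exact hρcontOn.mono (fun z hz =>
            Set.mem_Ioo.mpr ⟨hz.1, lt_of_le_of_lt hz.2 hxIr.2⟩)
        · intro z _; exact (hρpos z).le
      have hchain : ENNReal.ofReal (x - l) ≤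
          ENNReal.ofReal (C * (2 * Real.sqrt (Φ x))) := by
        have h7 : ENNReal.ofReal (x - l) = ∫⁻ t in Ioo l x, (1:ENNReal) := by
          rw [setLIntegral_one, Real.volume_Ioo]
        rw [h7]
        calc ∫⁻ t in Ioo l x, (1:ENNReal)
            ≤ ∫⁻ t in Ioo l x,
                ENNReal.ofReal C * ENNReal.ofReal (ρ t / Real.sqrt (Φ t)) := by
              apply lintegral_mono_ae
              refine (ae_restrict_iff' measurableSet_Ioo).mpr (Filter.Eventually.of_forall ?_)
              intro t ht
              rw [← ENNReal.ofReal_mul hC0, ← ENNReal.ofReal_one]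
              exact ENNReal.ofReal_le_ofReal (hC2 t ht)
          _ = ENNReal.ofReal C * ∫⁻ t in Ioo l x, ENNReal.ofReal (ρ t / Real.sqrt (Φ t)) :=
              lintegral_const_mul' _ _ ENNReal.ofReal_ne_top
          _ ≤ ENNReal.ofReal C * ENNReal.ofReal (2 * Real.sqrt (Φ x)) :=
              mul_le_mul' le_rfl hsqint
          _ = ENNReal.ofReal (C * (2 * Real.sqrt (Φ x))) := (ENNReal.ofReal_mul hC0).symm
      have hreal : x - l ≤ C * (2 * Real.sqrt (Φ x)) := by
        refine (ENNReal.ofReal_le_ofReal_iff ?_).mp hchain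
        exact mul_nonneg hC0 (by positivity)
      have hss : Real.sqrt (Φ x) * Real.sqrt (Φ x) = Φ x := Real.mul_self_sqrt hΦx.le
      calc x - l ≤ C * (2 * Real.sqrt (Φ x)) := hreal
      _ = 2 * Real.exp (K/2) * (Real.sqrt (Φ x) * Real.sqrt (Φ x)) / ρ x := by
          rw [hCdef]; ring
      _ = 2 * Real.exp (K/2) * Φ x / ρ x := by rw [hss]
    calc ∫⁻ x in Ioo l b, ENNReal.ofReal ((x - l) * β x ^ 2)
        ≤ ∫⁻ x in Ioo l b, ENNReal.ofReal (2 * Real.exp (K/2)) *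
            ENNReal.ofReal ((s x - sl) * β x ^ 2 / Real.exp (∫ z in c..x, β z)) := by
          apply lintegral_mono_ae
          refine (ae_restrict_iff' measurableSet_Ioo).mpr (Filter.Eventually.of_forall ?_)
          intro x hx
          rw [← ENNReal.ofReal_mul (by positivity)]
          apply ENNReal.ofReal_le_ofReal
          have hpt := hptA x hx
          have hq : (s x - sl) * β x ^ 2 / Real.exp (∫ z in c..x, β z) =
              Φ x * β x ^ 2 / ρ x := by
            simp only [hΦdef, hρdef, hwdef]
          rw [hq]
          calc (x - l) * β x ^ 2 ≤ (2 * Real.exp (K/2) * Φ x / ρ x) * β x ^ 2 :=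
              mul_le_mul_of_nonneg_right hpt (sq_nonneg (β x))
          _ = 2 * Real.exp (K/2) * (Φ x * β x ^ 2 / ρ x) := by ring
      _ = ENNReal.ofReal (2 * Real.exp (K/2)) * ∫⁻ x in Ioo l b,
            ENNReal.ofReal ((s x - sl) * β x ^ 2 / Real.exp (∫ z in c..x, β z)) :=
          lintegral_const_mul' _ _ ENNReal.ofReal_ne_top
      _ < ⊤ := ENNReal.mul_lt_top ENNReal.ofReal_lt_top hA
  · -- B < ⊤ → A < ⊤
    intro hB
    set K := (∫⁻ x in Ioo l b, ENNReal.ofReal ((x - l) * β x ^ 2)).toReal with hKdef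
    have hKofReal : ENNReal.ofReal K = ∫⁻ x in Ioo l b, ENNReal.ofReal ((x - l) * β x ^ 2) :=
      ENNReal.ofReal_toReal hB.ne
    have hK0 : 0 ≤ K := ENNReal.toReal_nonneg
    have hptB : ∀ x ∈ Ioo l b, Φ x ≤ 2 * Real.exp (K/2) * (x - l) * ρ x := by
      intro x hx
      have hxIr : x ∈ Ioo l r := ⟨hx.1, lt_trans hx.2 hbr⟩
      have hlx : l < x := hx.1
      set C := ρ x * Real.exp (K/2) * Real.sqrt (x - l) with hCdef
      have hC0 : 0 ≤ C := by
        have := (hρpos x).le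
        have := Real.sqrt_nonneg (x - l)
        have := (Real.exp_pos (K/2)).le
        rw [hCdef]; positivity
      have hC1 : ∀ y ∈ Ioo l x, ρ y ≤ C * (1 / Real.sqrt (y - l)) := by
        intro y hy
        have hyIr : y ∈ Ioo l r := ⟨hy.1, lt_trans hy.2 hxIr.2⟩
        have hbound : ∫⁻ z in Ioc y x,
            ENNReal.ofReal ((z - l) / (1:ℝ) * β z ^ 2) ≤ ENNReal.ofReal K := by
          have heq : ∀ z ∈ Ioc y x,
              ENNReal.ofReal ((z - l) / (1:ℝ) * β z ^ 2) =
              ENNReal.ofReal ((z - l) * β z ^ 2) := by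
            intro z _; rw [div_one]
          rw [setLIntegral_congr_fun measurableSet_Ioc heq,
            hKofReal]
          have hsub : Ioc y x ⊆ Ioo l b := fun z hz =>
            Set.mem_Ioo.mpr ⟨lt_trans hy.1 hz.1, lt_of_le_of_lt hz.2 hx.2⟩
          exact lintegral_mono' (Measure.restrict_mono hsub le_rfl) le_rfl
        have hcs : Real.exp |∫ z in y..x, β z| ≤
            Real.exp (K/2) * (Real.sqrt (x - l) / Real.sqrt (y - l)) :=
          cs_bound β (fun _ => (1:ℝ)) (fun z => z - l) K hy.2 hK0 hβ
            (hβI y x hy.1 hxIr.2) continuousOn_const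
            ((continuous_id.sub continuous_const).continuousOn)
            (fun z _ => one_pos) (fun z hz => by show (0:ℝ) < z - l; linarith [hz.1, hy.1])
            (fun z _ => (hasDerivAt_id z).sub_const l) hbound
        have hwd := hwadd y x hyIr hxIr
        have h2 : w y - w x ≤ |∫ z in y..x, β z| := by
          rw [← hwd]
          calc w y - w x = -(w x - w y) := by ring
          _ ≤ |w x - w y| := neg_le_abs _
        have h3 : ρ y / ρ x = Real.exp (w y - w x) := by
          simp only [hρdef]; rw [Real.exp_sub]
        have h4 : ρ y / ρ x ≤ Real.exp (K/2) * (Real.sqrt (x - l) / Real.sqrt (y - l)) := by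
          rw [h3]
          exact le_trans (Real.exp_le_exp.mpr h2) hcs
        rw [div_le_iff₀ (hρpos x)] at h4
        calc ρ y ≤ Real.exp (K/2) * (Real.sqrt (x - l) / Real.sqrt (y - l)) * ρ x := h4
        _ = C * (1 / Real.sqrt (y - l)) := by rw [hCdef]; ring
      have hsqint : ∫⁻ t in Ioo l x, ENNReal.ofReal ((1:ℝ) / Real.sqrt (t - l)) ≤
          ENNReal.ofReal (2 * Real.sqrt (x - l)) := by
        have h := int_sqrt_bound hlx (fun z => z - l) (fun _ => (1:ℝ))
          (fun z _ => (hasDerivAt_id z).sub_const l)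
          (fun z hz => by show (0:ℝ) < z - l; linarith [hz.1])
          continuousOn_const (fun z _ => zero_le_one)
        exact h
      have hchain : ENNReal.ofReal (Φ x) ≤ ENNReal.ofReal (C * (2 * Real.sqrt (x - l))) := by
        rw [hΦrep x hxIr]
        calc ∫⁻ t in Ioo l x, ENNReal.ofReal (ρ t)
            ≤ ∫⁻ t in Ioo l x, ENNReal.ofReal C * ENNReal.ofReal ((1:ℝ) / Real.sqrt (t - l)) := by
              apply lintegral_mono_ae
              refine (ae_restrict_iff' measurableSet_Ioo).mpr (Filter.Eventually.of_forall ?_)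
              intro t ht
              rw [← ENNReal.ofReal_mul hC0]
              exact ENNReal.ofReal_le_ofReal (hC1 t ht)
          _ = ENNReal.ofReal C * ∫⁻ t in Ioo l x, ENNReal.ofReal ((1:ℝ) / Real.sqrt (t - l)) :=
              lintegral_const_mul' _ _ ENNReal.ofReal_ne_top
          _ ≤ ENNReal.ofReal C * ENNReal.ofReal (2 * Real.sqrt (x - l)) :=
              mul_le_mul' le_rfl hsqint
          _ = ENNReal.ofReal (C * (2 * Real.sqrt (x - l))) := (ENNReal.ofReal_mul hC0).symm
      have hreal : Φ x ≤ C * (2 * Real.sqrt (x - l)) := by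
        refine (ENNReal.ofReal_le_ofReal_iff ?_).mp hchain
        have := Real.sqrt_nonneg (x - l)
        nlinarith
      have hss : Real.sqrt (x - l) * Real.sqrt (x - l) = x - l :=
        Real.mul_self_sqrt (by linarith)
      calc Φ x ≤ C * (2 * Real.sqrt (x - l)) := hreal
      _ = 2 * Real.exp (K/2) * (Real.sqrt (x - l) * Real.sqrt (x - l)) * ρ x := by
          rw [hCdef]; ring
      _ = 2 * Real.exp (K/2) * (x - l) * ρ x := by rw [hss]
    calc ∫⁻ x in Ioo l b, ENNReal.ofReal ((s x - sl) * β x ^ 2 / Real.exp (∫ z in c..x, β z))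
        ≤ ∫⁻ x in Ioo l b,
            ENNReal.ofReal (2 * Real.exp (K/2)) * ENNReal.ofReal ((x - l) * β x ^ 2) := by
          apply lintegral_mono_ae
          refine (ae_restrict_iff' measurableSet_Ioo).mpr (Filter.Eventually.of_forall ?_)
          intro x hx
          rw [← ENNReal.ofReal_mul (by positivity)]
          apply ENNReal.ofReal_le_ofReal
          have hpt := hptB x hx
          have hρx := hρpos x
          have hq : (s x - sl) * β x ^ 2 / Real.exp (∫ z in c..x, β z) =
              Φ x * β x ^ 2 / ρ x := by
            simp only [hΦdef, hρdef, hwdef]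
          rw [hq, div_le_iff₀ hρx]
          calc Φ x * β x ^ 2 ≤ 2 * Real.exp (K/2) * (x - l) * ρ x * β x ^ 2 :=
              mul_le_mul_of_nonneg_right hpt (sq_nonneg (β x))
          _ = 2 * Real.exp (K/2) * ((x - l) * β x ^ 2) * ρ x := by ring
      _ = ENNReal.ofReal (2 * Real.exp (K/2)) *
            ∫⁻ x in Ioo l b, ENNReal.ofReal ((x - l) * β x ^ 2) :=
          lintegral_const_mul' _ _ ENNReal.ofReal_ne_top
      _ < ⊤ := ENNReal.mul_lt_top ENNReal.ofReal_lt_top hB
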